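/- Let S and A be finite nonempty sets and k ∈ ℕ. Consider two branched processes i ∈ {1,2} from a common initial state distribution ρ0: for timesteps t < k process i uses policy π_i^post and dynamics p_i^post, and for timesteps t ≥ k it uses policy π_i^pre and dynamics p_i^pre. Suppose the per-step divergences during the post-branch phase are bounded by ε_m^post (expected TV of dynamics over the time-t marginal of process 1) and ε_π^post (max over states of policy TV), and during the pre-branch phase by ε_m^pre and ε_π^pre respectively. Let r be a reward bounded by r_max ≥ 0 and γ ∈ (0,1). Then the discounted returns satisfy |η_1 − η_2| ≤ 2·r_max·[ γ^{k+1}·(ε_m^pre + ε_π^pre)/(1−γ)² + k·(ε_m^post + ε_π^post)/(1−γ) + γ^k·ε_π^pre/(1−γ) + ε_π^post/(1−γ) ]. -/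

import Mathlib

open scoped BigOperators

/-- Total variation distance between two probability mass functions on a finite type. -/
noncomputable def tv {X : Type*} [Fintype X] (q1 q2 : PMF X) : ℝ :=
  (1 / 2) * ∑ x, |(q1 x).toReal - (q2 x).toReal|

/-- Total variation distance between two real-valued distributions on a finite type. -/
noncomputable def tvFun {X : Type*} [Fintype X] (d1 d2 : X → ℝ) : ℝ :=
  (1 / 2) * ∑ x, |d1 x - d2 x|

/-- Time-`t` state-action marginal of a (possibly time-varying) policy/dynamics pair,
started from initial state distribution `ρ0`:  `d⁰(s,a) = ρ0(s)·π₀(a|s)` and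
`d^{t+1}(s,a) = Σ_{s',a'} d^t(s',a')·p_t(s|s',a')·π_{t+1}(a|s)`. -/
noncomputable def marginal {S A : Type*} [Fintype S] [Fintype A]
    (ρ0 : PMF S) (πseq : ℕ → S → PMF A) (pseq : ℕ → S × A → PMF S) :
    ℕ → S × A → ℝ
  | 0 => fun sa => (ρ0 sa.1).toReal * ((πseq 0 sa.1) sa.2).toReal
  | t + 1 => fun sa =>
      ∑ s' : S, ∑ a' : A,
        marginal ρ0 πseq pseq t (s', a') * ((pseq t (s', a')) sa.1).toReal *
          ((πseq (t + 1) sa.1) sa.2).toReal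

/-- Discounted return `η = Σ_t γ^t Σ_{s,a} d^t(s,a)·r(s,a)`. -/
noncomputable def ret {S A : Type*} [Fintype S] [Fintype A]
    (γ : ℝ) (r : S × A → ℝ) (d : ℕ → S × A → ℝ) : ℝ :=
  ∑' t : ℕ, γ ^ t * ∑ sa : S × A, d t sa * r sa

/-! ### Auxiliary lemmas -/

lemma pmf_sum_toReal {X : Type*} [Fintype X] (q : PMF X) :
    ∑ x, (q x).toReal = 1 := by
  have h := q.tsum_coe
  rw [tsum_fintype] at h
  have h2 : (∑ x, q x).toReal = (1 : ENNReal).toReal := by rw [h]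
  rw [ENNReal.toReal_sum (fun x _ => PMF.apply_ne_top q x)] at h2
  simpa using h2

lemma tv_nonneg {X : Type*} [Fintype X] (q1 q2 : PMF X) : 0 ≤ tv q1 q2 := by
  unfold tv
  positivity

lemma tvFun_nonneg {X : Type*} [Fintype X] (d1 d2 : X → ℝ) : 0 ≤ tvFun d1 d2 := by
  unfold tvFun
  positivity

lemma sum_abs_eq_two_tv {X : Type*} [Fintype X] (q1 q2 : PMF X) :
    ∑ x, |(q1 x).toReal - (q2 x).toReal| = 2 * tv q1 q2 := by
  unfold tv; ring

lemma marginal_nonneg {S A : Type*} [Fintype S] [Fintype A]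
    (ρ0 : PMF S) (πs : ℕ → S → PMF A) (ps : ℕ → S × A → PMF S) :
    ∀ t sa, 0 ≤ marginal ρ0 πs ps t sa := by
  intro t
  induction t with
  | zero =>
    intro sa
    simp only [marginal]
    positivity
  | succ t ih =>
    intro sa
    simp only [marginal]
    refine Finset.sum_nonneg fun s' _ => Finset.sum_nonneg fun a' _ => ?_
    have h := ih (s', a')
    positivity

lemma marginal_mass {S A : Type*} [Fintype S] [Fintype A]
    (ρ0 : PMF S) (πs : ℕ → S → PMF A) (ps : ℕ → S × A → PMF S) :
    ∀ t, ∑ sa : S × A, marginal ρ0 πs ps t sa = 1 := by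
  intro t
  induction t with
  | zero =>
    rw [Fintype.sum_prod_type]
    simp only [marginal]
    calc ∑ s, ∑ a, (ρ0 s).toReal * ((πs 0 s) a).toReal
        = ∑ s : S, (ρ0 s).toReal * ∑ a, ((πs 0 s) a).toReal := by
          simp [Finset.mul_sum]
      _ = 1 := by simp [pmf_sum_toReal]
  | succ t ih =>
    rw [Fintype.sum_prod_type]
    simp only [marginal]
    have key : ∀ s : S,
        ∑ a : A, ∑ s' : S, ∑ a' : A,
          marginal ρ0 πs ps t (s', a') * ((ps t (s', a')) s).toReal * ((πs (t+1) s) a).toReal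
        = ∑ s' : S, ∑ a' : A, marginal ρ0 πs ps t (s', a') * ((ps t (s', a')) s).toReal := by
      intro s
      rw [Finset.sum_comm]
      refine Finset.sum_congr rfl fun s' _ => ?_
      rw [Finset.sum_comm]
      refine Finset.sum_congr rfl fun a' _ => ?_
      rw [← Finset.mul_sum, pmf_sum_toReal, mul_one]
    calc ∑ s : S, ∑ a : A, ∑ s' : S, ∑ a' : A,
          marginal ρ0 πs ps t (s', a') * ((ps t (s', a')) s).toReal * ((πs (t+1) s) a).toReal
        = ∑ s : S, ∑ s' : S, ∑ a' : A,
            marginal ρ0 πs ps t (s', a') * ((ps t (s', a')) s).toReal :=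
          Finset.sum_congr rfl fun s _ => key s
      _ = ∑ s' : S, ∑ a' : A,
            marginal ρ0 πs ps t (s', a') * ∑ s : S, ((ps t (s', a')) s).toReal := by
          rw [Finset.sum_comm]
          refine Finset.sum_congr rfl fun s' _ => ?_
          rw [Finset.sum_comm]
          refine Finset.sum_congr rfl fun a' _ => ?_
          rw [Finset.mul_sum]
      _ = ∑ s' : S, ∑ a' : A, marginal ρ0 πs ps t (s', a') := by
          simp [pmf_sum_toReal]
      _ = 1 := by rw [← Fintype.sum_prod_type]; exact ih

lemma tv_step {S A : Type*} [Fintype S] [Fintype A]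
    (d1 d2 : S × A → ℝ) (hd1 : ∀ sa, 0 ≤ d1 sa)
    (hm1 : ∑ sa : S × A, d1 sa = 1)
    (p1 p2 : S × A → PMF S) (π1 π2 : S → PMF A) (εm επ : ℝ)
    (hεm : ∑ sa : S × A, d1 sa * tv (p1 sa) (p2 sa) ≤ εm)
    (hεπ : ∀ s, tv (π1 s) (π2 s) ≤ επ) :
    tvFun
      (fun sa : S × A => ∑ s' : S, ∑ a' : A,
        d1 (s', a') * ((p1 (s', a')) sa.1).toReal * ((π1 sa.1) sa.2).toReal)
      (fun sa : S × A => ∑ s' : S, ∑ a' : A,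
        d2 (s', a') * ((p2 (s', a')) sa.1).toReal * ((π2 sa.1) sa.2).toReal)
      ≤ tvFun d1 d2 + εm + επ := by
  classical
  set M1 : S → ℝ := fun s => ∑ s' : S, ∑ a' : A, d1 (s', a') * ((p1 (s', a')) s).toReal with hM1
  set M2 : S → ℝ := fun s => ∑ s' : S, ∑ a' : A, d2 (s', a') * ((p2 (s', a')) s).toReal with hM2
  have hfac1 : ∀ s a, (∑ s' : S, ∑ a' : A,
      d1 (s', a') * ((p1 (s', a')) s).toReal * ((π1 s) a).toReal) = M1 s * ((π1 s) a).toReal := by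
    intro s a
    rw [hM1]
    simp [Finset.sum_mul]
  have hfac2 : ∀ s a, (∑ s' : S, ∑ a' : A,
      d2 (s', a') * ((p2 (s', a')) s).toReal * ((π2 s) a).toReal) = M2 s * ((π2 s) a).toReal := by
    intro s a
    rw [hM2]
    simp [Finset.sum_mul]
  have hM1nonneg : ∀ s, 0 ≤ M1 s := by
    intro s
    refine Finset.sum_nonneg fun s' _ => Finset.sum_nonneg fun a' _ => ?_
    have := hd1 (s', a')
    positivity
  have hM1sum : ∑ s : S, M1 s = 1 := by
    rw [hM1]
    calc ∑ s : S, ∑ s' : S, ∑ a' : A, d1 (s', a') * ((p1 (s', a')) s).toReal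
        = ∑ s' : S, ∑ a' : A, d1 (s', a') * ∑ s : S, ((p1 (s', a')) s).toReal := by
          rw [Finset.sum_comm]
          refine Finset.sum_congr rfl fun s' _ => ?_
          rw [Finset.sum_comm]
          exact Finset.sum_congr rfl fun a' _ => (Finset.mul_sum _ _ _).symm
      _ = ∑ s' : S, ∑ a' : A, d1 (s', a') := by simp [pmf_sum_toReal]
      _ = 1 := by rw [← Fintype.sum_prod_type]; exact hm1
  have hΔM : ∑ s : S, |M1 s - M2 s| ≤ 2 * tvFun d1 d2 + 2 * εm := by
    have hpt : ∀ s : S, |M1 s - M2 s| ≤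
        ∑ s' : S, ∑ a' : A, (d1 (s', a') * |((p1 (s', a')) s).toReal - ((p2 (s', a')) s).toReal|
          + |d1 (s', a') - d2 (s', a')| * ((p2 (s', a')) s).toReal) := by
      intro s
      rw [hM1, hM2, ← Finset.sum_sub_distrib]
      refine (Finset.abs_sum_le_sum_abs _ _).trans ?_
      refine Finset.sum_le_sum fun s' _ => ?_
      rw [← Finset.sum_sub_distrib]
      refine (Finset.abs_sum_le_sum_abs _ _).trans ?_
      refine Finset.sum_le_sum fun a' _ => ?_
      have h1 : d1 (s', a') * ((p1 (s', a')) s).toReal - d2 (s', a') * ((p2 (s', a')) s).toReal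
          = d1 (s', a') * (((p1 (s', a')) s).toReal - ((p2 (s', a')) s).toReal)
            + (d1 (s', a') - d2 (s', a')) * ((p2 (s', a')) s).toReal := by ring
      rw [h1]
      refine (abs_add_le _ _).trans ?_
      rw [abs_mul, abs_mul, abs_of_nonneg (hd1 _), abs_of_nonneg ENNReal.toReal_nonneg]
    calc ∑ s : S, |M1 s - M2 s|
        ≤ ∑ s : S, ∑ s' : S, ∑ a' : A,
            (d1 (s', a') * |((p1 (s', a')) s).toReal - ((p2 (s', a')) s).toReal|
              + |d1 (s', a') - d2 (s', a')| * ((p2 (s', a')) s).toReal) :=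
          Finset.sum_le_sum fun s _ => hpt s
      _ = ∑ s' : S, ∑ a' : A,
            (d1 (s', a') * (2 * tv (p1 (s', a')) (p2 (s', a'))) + |d1 (s', a') - d2 (s', a')|) := by
          rw [Finset.sum_comm]
          refine Finset.sum_congr rfl fun s' _ => ?_
          rw [Finset.sum_comm]
          refine Finset.sum_congr rfl fun a' _ => ?_
          rw [Finset.sum_add_distrib, ← Finset.mul_sum, ← Finset.mul_sum,
            sum_abs_eq_two_tv, pmf_sum_toReal, mul_one]
      _ = 2 * (∑ sa : S × A, d1 sa * tv (p1 sa) (p2 sa)) + 2 * tvFun d1 d2 := by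
          have e1 : ∑ s' : S, ∑ a' : A, d1 (s', a') * (2 * tv (p1 (s', a')) (p2 (s', a')))
              = 2 * ∑ sa : S × A, d1 sa * tv (p1 sa) (p2 sa) := by
            rw [Fintype.sum_prod_type, Finset.mul_sum]
            refine Finset.sum_congr rfl fun s' _ => ?_
            rw [Finset.mul_sum]
            exact Finset.sum_congr rfl fun a' _ => by ring
          have e2 : ∑ s' : S, ∑ a' : A, |d1 (s', a') - d2 (s', a')| = 2 * tvFun d1 d2 := by
            unfold tvFun
            rw [show (∑ x : S × A, |d1 x - d2 x|)
              = ∑ s' : S, ∑ a' : A, |d1 (s', a') - d2 (s', a')| from Fintype.sum_prod_type _]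
            ring
          simp only [Finset.sum_add_distrib]
          rw [e1, e2]
      _ ≤ 2 * εm + 2 * tvFun d1 d2 := by linarith
      _ = 2 * tvFun d1 d2 + 2 * εm := by ring
  have habs : ∀ s a, |M1 s * ((π1 s) a).toReal - M2 s * ((π2 s) a).toReal|
      ≤ M1 s * |((π1 s) a).toReal - ((π2 s) a).toReal| + |M1 s - M2 s| * ((π2 s) a).toReal := by
    intro s a
    have h1 : M1 s * ((π1 s) a).toReal - M2 s * ((π2 s) a).toReal
        = M1 s * (((π1 s) a).toReal - ((π2 s) a).toReal) + (M1 s - M2 s) * ((π2 s) a).toReal := by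
      ring
    rw [h1]
    refine (abs_add_le _ _).trans ?_
    rw [abs_mul, abs_mul, abs_of_nonneg (hM1nonneg s), abs_of_nonneg ENNReal.toReal_nonneg]
  have main : tvFun
      (fun sa : S × A => ∑ s' : S, ∑ a' : A,
        d1 (s', a') * ((p1 (s', a')) sa.1).toReal * ((π1 sa.1) sa.2).toReal)
      (fun sa : S × A => ∑ s' : S, ∑ a' : A,
        d2 (s', a') * ((p2 (s', a')) sa.1).toReal * ((π2 sa.1) sa.2).toReal)
      = (1/2) * ∑ s : S, ∑ a : A, |M1 s * ((π1 s) a).toReal - M2 s * ((π2 s) a).toReal| := by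
    unfold tvFun
    rw [Fintype.sum_prod_type]
    congr 1
    refine Finset.sum_congr rfl fun s _ => Finset.sum_congr rfl fun a _ => ?_
    dsimp only
    rw [hfac1 s a, hfac2 s a]
  rw [main]
  have hbound : ∑ s : S, ∑ a : A, |M1 s * ((π1 s) a).toReal - M2 s * ((π2 s) a).toReal|
      ≤ 2 * επ + (2 * tvFun d1 d2 + 2 * εm) := by
    calc ∑ s : S, ∑ a : A, |M1 s * ((π1 s) a).toReal - M2 s * ((π2 s) a).toReal|
        ≤ ∑ s : S, ∑ a : A, (M1 s * |((π1 s) a).toReal - ((π2 s) a).toReal|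
            + |M1 s - M2 s| * ((π2 s) a).toReal) :=
          Finset.sum_le_sum fun s _ => Finset.sum_le_sum fun a _ => habs s a
      _ = ∑ s : S, (M1 s * (2 * tv (π1 s) (π2 s)) + |M1 s - M2 s|) := by
          refine Finset.sum_congr rfl fun s _ => ?_
          rw [Finset.sum_add_distrib, ← Finset.mul_sum, ← Finset.mul_sum,
            sum_abs_eq_two_tv, pmf_sum_toReal, mul_one]
      _ = ∑ s : S, M1 s * (2 * tv (π1 s) (π2 s)) + ∑ s : S, |M1 s - M2 s| :=
          Finset.sum_add_distrib
      _ ≤ ∑ s : S, M1 s * (2 * επ) + (2 * tvFun d1 d2 + 2 * εm) := by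
          refine add_le_add (Finset.sum_le_sum fun s _ => ?_) hΔM
          exact mul_le_mul_of_nonneg_left (by linarith [hεπ s]) (hM1nonneg s)
      _ = 2 * επ + (2 * tvFun d1 d2 + 2 * εm) := by
          rw [← Finset.sum_mul, hM1sum, one_mul]
  linarith

lemma tv_base {S A : Type*} [Fintype S] [Fintype A]
    (ρ0 : PMF S) (π1 π2 : S → PMF A) (επ : ℝ)
    (hεπ : ∀ s, tv (π1 s) (π2 s) ≤ επ) :
    tvFun (fun sa : S × A => (ρ0 sa.1).toReal * ((π1 sa.1) sa.2).toReal)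
      (fun sa : S × A => (ρ0 sa.1).toReal * ((π2 sa.1) sa.2).toReal) ≤ επ := by
  unfold tvFun
  rw [Fintype.sum_prod_type]
  calc (1/2 : ℝ) * ∑ s : S, ∑ a : A,
        |(ρ0 s).toReal * ((π1 s) a).toReal - (ρ0 s).toReal * ((π2 s) a).toReal|
      = (1/2) * ∑ s : S, (ρ0 s).toReal * ∑ a : A, |((π1 s) a).toReal - ((π2 s) a).toReal| := by
        congr 1
        refine Finset.sum_congr rfl fun s _ => ?_
        rw [Finset.mul_sum]
        refine Finset.sum_congr rfl fun a _ => ?_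
        rw [← mul_sub, abs_mul, abs_of_nonneg ENNReal.toReal_nonneg]
    _ = ∑ s : S, (ρ0 s).toReal * tv (π1 s) (π2 s) := by
        rw [Finset.mul_sum]
        refine Finset.sum_congr rfl fun s _ => ?_
        rw [sum_abs_eq_two_tv]
        ring
    _ ≤ ∑ s : S, (ρ0 s).toReal * επ :=
        Finset.sum_le_sum fun s _ =>
          mul_le_mul_of_nonneg_left (hεπ s) ENNReal.toReal_nonneg
    _ = επ := by rw [← Finset.sum_mul, pmf_sum_toReal, one_mul]

lemma sum_reward_diff {S A : Type*} [Fintype S] [Fintype A]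
    (d1 d2 : S × A → ℝ) (r : S × A → ℝ) (rmax : ℝ)
    (hr : ∀ sa, |r sa| ≤ rmax) :
    |∑ sa : S × A, d1 sa * r sa - ∑ sa : S × A, d2 sa * r sa| ≤ 2 * rmax * tvFun d1 d2 := by
  rw [← Finset.sum_sub_distrib]
  refine (Finset.abs_sum_le_sum_abs _ _).trans ?_
  have h : ∀ sa : S × A, |d1 sa * r sa - d2 sa * r sa| ≤ |d1 sa - d2 sa| * rmax := by
    intro sa
    rw [← sub_mul, abs_mul]
    exact mul_le_mul_of_nonneg_left (hr sa) (abs_nonneg _)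
  refine (Finset.sum_le_sum fun sa _ => h sa).trans ?_
  rw [← Finset.sum_mul]
  unfold tvFun
  rw [mul_comm]
  nlinarith [Finset.sum_nonneg (fun sa (_ : sa ∈ Finset.univ) => abs_nonneg (d1 sa - d2 sa))]

lemma sum_reward_abs {S A : Type*} [Fintype S] [Fintype A]
    (d : S × A → ℝ) (hd : ∀ sa, 0 ≤ d sa) (hm : ∑ sa : S × A, d sa = 1)
    (r : S × A → ℝ) (rmax : ℝ) (hr : ∀ sa, |r sa| ≤ rmax) :
    |∑ sa : S × A, d sa * r sa| ≤ rmax := by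
  refine (Finset.abs_sum_le_sum_abs _ _).trans ?_
  calc ∑ sa : S × A, |d sa * r sa| ≤ ∑ sa : S × A, d sa * rmax := by
        refine Finset.sum_le_sum fun sa _ => ?_
        rw [abs_mul, abs_of_nonneg (hd sa)]
        exact mul_le_mul_of_nonneg_left (hr sa) (hd sa)
    _ = rmax := by rw [← Finset.sum_mul, hm, one_mul]

lemma tsum_shift_indicator (γ : ℝ) (hγ0 : 0 < γ) (hγ1 : γ < 1) (k : ℕ) :
    Summable (fun t : ℕ => (if k ≤ t then (1:ℝ) else 0) * γ ^ t) ∧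
    ∑' t : ℕ, (if k ≤ t then (1:ℝ) else 0) * γ ^ t = γ ^ k * (1 - γ)⁻¹ := by
  set f : ℕ → ℝ := fun t => (if k ≤ t then (1:ℝ) else 0) * γ ^ t with hf
  have hsummf : Summable f := by
    refine Summable.of_norm_bounded (summable_geometric_of_lt_one hγ0.le hγ1) ?_
    intro t
    rw [hf]
    simp only [Real.norm_eq_abs, abs_mul]
    rcases le_or_gt k t with h | h
    · simp [h, abs_of_nonneg (pow_nonneg hγ0.le t), le_refl]
    · simp [Nat.not_le.mpr h, abs_of_nonneg (pow_nonneg hγ0.le t), pow_nonneg hγ0.le t]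
  refine ⟨hsummf, ?_⟩
  have hzero : ∀ i ∈ Finset.range k, f i = 0 := by
    intro i hi
    rw [hf]
    simp [Nat.not_le.mpr (Finset.mem_range.mp hi)]
  have hshift := Summable.sum_add_tsum_nat_add k hsummf
  rw [Finset.sum_eq_zero hzero, zero_add] at hshift
  rw [← hshift]
  have h1 : ∀ n : ℕ, f (n + k) = γ ^ k * γ ^ n := by
    intro n
    rw [hf]
    simp [Nat.le_add_left, pow_add, mul_comm]
  rw [tsum_congr h1, tsum_mul_left, tsum_geometric_of_lt_one hγ0.le hγ1]

lemma tsum_shift_linear (γ : ℝ) (hγ0 : 0 < γ) (hγ1 : γ < 1) (k : ℕ) :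
    Summable (fun t : ℕ => ((t - k : ℕ) : ℝ) * γ ^ t) ∧
    ∑' t : ℕ, ((t - k : ℕ) : ℝ) * γ ^ t = γ ^ (k + 1) / (1 - γ) ^ 2 := by
  set f : ℕ → ℝ := fun t => ((t - k : ℕ) : ℝ) * γ ^ t with hf
  have hγabs : ‖γ‖ < 1 := by rw [Real.norm_eq_abs, abs_of_nonneg hγ0.le]; exact hγ1
  have hsumm0 : Summable (fun n : ℕ => (n : ℝ) * γ ^ n) := by
    simpa using summable_pow_mul_geometric_of_norm_lt_one 1 hγabs
  have heq : ∀ n : ℕ, f (n + k) = γ ^ k * ((n : ℝ) * γ ^ n) := by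
    intro n
    rw [hf]
    simp only [Nat.add_sub_cancel, pow_add]
    ring
  have hsummf : Summable f := by
    rw [← summable_nat_add_iff k]
    simp only [heq]
    exact hsumm0.mul_left _
  refine ⟨hsummf, ?_⟩
  have hzero : ∀ i ∈ Finset.range k, f i = 0 := by
    intro i hi
    rw [hf]
    simp [Nat.sub_eq_zero_of_le (Finset.mem_range.mp hi).le]
  have hshift := Summable.sum_add_tsum_nat_add k hsummf
  rw [Finset.sum_eq_zero hzero, zero_add] at hshift
  rw [← hshift, tsum_congr heq, tsum_mul_left, tsum_coe_mul_geometric_of_norm_lt_one hγabs]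
  rw [pow_succ]
  ring

/-- Returns bound for branched rollouts (Lemma B.4). -/
theorem returns_bound_branched
    {S A : Type*} [Fintype S] [Fintype A] [Nonempty S] [Nonempty A]
    (k : ℕ)
    (p1pre p2pre p1post p2post : S × A → PMF S)
    (π1pre π2pre π1post π2post : S → PMF A) (ρ0 : PMF S)
    (r : S × A → ℝ) (rmax : ℝ) (hrmax : 0 ≤ rmax) (hr : ∀ sa : S × A, |r sa| ≤ rmax)
    (γ : ℝ) (hγ0 : 0 < γ) (hγ1 : γ < 1) (εmpre επpre εmpost επpost : ℝ)
    (hmpost : ∀ t : ℕ, t < k → ∑ sa : S × A,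
      marginal ρ0 (fun t => if t < k then π1post else π1pre)
        (fun t => if t < k then p1post else p1pre) t sa *
          tv (p1post sa) (p2post sa) ≤ εmpost)
    (hπpost : ∀ s : S, tv (π1post s) (π2post s) ≤ επpost)
    (hmpre : ∀ t : ℕ, k ≤ t → ∑ sa : S × A,
      marginal ρ0 (fun t => if t < k then π1post else π1pre)
        (fun t => if t < k then p1post else p1pre) t sa *
          tv (p1pre sa) (p2pre sa) ≤ εmpre)
    (hπpre : ∀ s : S, tv (π1pre s) (π2pre s) ≤ επpre) :
    |ret γ r (marginal ρ0 (fun t => if t < k then π1post else π1pre)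
          (fun t => if t < k then p1post else p1pre)) -
        ret γ r (marginal ρ0 (fun t => if t < k then π2post else π2pre)
          (fun t => if t < k then p2post else p2pre))| ≤
      2 * rmax * (γ ^ (k + 1) * (εmpre + επpre) / (1 - γ) ^ 2 +
        (k : ℝ) * (εmpost + επpost) / (1 - γ) +
        γ ^ k * επpre / (1 - γ) + επpost / (1 - γ)) := by
  classical
  set πs1 : ℕ → S → PMF A := fun t => if t < k then π1post else π1pre with hπs1
  set ps1 : ℕ → S × A → PMF S := fun t => if t < k then p1post else p1pre with hps1
  set πs2 : ℕ → S → PMF A := fun t => if t < k then π2post else π2pre with hπs2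
  set ps2 : ℕ → S × A → PMF S := fun t => if t < k then p2post else p2pre with hps2
  set D1 : ℕ → S × A → ℝ := marginal ρ0 πs1 ps1 with hD1
  set D2 : ℕ → S × A → ℝ := marginal ρ0 πs2 ps2 with hD2
  -- nonnegativity of the epsilons
  have hεπpost0 : 0 ≤ επpost := le_trans (tv_nonneg _ _) (hπpost (Classical.arbitrary S))
  have hεπpre0 : 0 ≤ επpre := le_trans (tv_nonneg _ _) (hπpre (Classical.arbitrary S))
  have hεmpre0 : 0 ≤ εmpre := by
    refine le_trans ?_ (hmpre k le_rfl)
    exact Finset.sum_nonneg fun sa _ =>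
      mul_nonneg (marginal_nonneg ρ0 πs1 ps1 k sa) (tv_nonneg _ _)
  have hεmpost0 : 0 < k → 0 ≤ εmpost := by
    intro hk
    refine le_trans ?_ (hmpost 0 hk)
    exact Finset.sum_nonneg fun sa _ =>
      mul_nonneg (marginal_nonneg ρ0 πs1 ps1 0 sa) (tv_nonneg _ _)
  -- one-step recursion for the TV distance of the marginals
  have hstep : ∀ t : ℕ, tvFun (D1 (t+1)) (D2 (t+1)) ≤
      tvFun (D1 t) (D2 t) + (if t < k then εmpost else εmpre)
        + (if t + 1 < k then επpost else επpre) := by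
    intro t
    have h1 : D1 (t+1) = fun sa : S × A => ∑ s' : S, ∑ a' : A,
        D1 t (s', a') * ((ps1 t (s', a')) sa.1).toReal * ((πs1 (t+1) sa.1) sa.2).toReal := by
      funext sa
      rw [hD1]
      simp only [marginal]
    have h2 : D2 (t+1) = fun sa : S × A => ∑ s' : S, ∑ a' : A,
        D2 t (s', a') * ((ps2 t (s', a')) sa.1).toReal * ((πs2 (t+1) sa.1) sa.2).toReal := by
      funext sa
      rw [hD2]
      simp only [marginal]
    rw [h1, h2]
    refine tv_step (D1 t) (D2 t) (marginal_nonneg ρ0 πs1 ps1 t) (marginal_mass ρ0 πs1 ps1 t)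
      (ps1 t) (ps2 t) (πs1 (t+1)) (πs2 (t+1)) _ _ ?_ ?_
    · by_cases ht : t < k
      · have e1 : ps1 t = p1post := by rw [hps1]; simp [ht]
        have e2 : ps2 t = p2post := by rw [hps2]; simp [ht]
        rw [e1, e2, if_pos ht]
        exact hmpost t ht
      · have e1 : ps1 t = p1pre := by rw [hps1]; simp [ht]
        have e2 : ps2 t = p2pre := by rw [hps2]; simp [ht]
        rw [e1, e2, if_neg ht]
        exact hmpre t (Nat.not_lt.mp ht)
    · intro s
      by_cases ht : t + 1 < k
      · have e1 : πs1 (t+1) = π1post := by rw [hπs1]; simp [ht]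
        have e2 : πs2 (t+1) = π2post := by rw [hπs2]; simp [ht]
        rw [e1, e2, if_pos ht]
        exact hπpost s
      · have e1 : πs1 (t+1) = π1pre := by rw [hπs1]; simp [ht]
        have e2 : πs2 (t+1) = π2pre := by rw [hπs2]; simp [ht]
        rw [e1, e2, if_neg ht]
        exact hπpre s
  -- accumulated bound
  set B : ℕ → ℝ := fun t => ((min t k : ℕ) : ℝ) * (εmpost + επpost)
      + ((t - k : ℕ) : ℝ) * (εmpre + επpre) + επpost
      + (if k ≤ t then επpre else 0) with hB
  have hδB : ∀ t : ℕ, tvFun (D1 t) (D2 t) ≤ B t := by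
    intro t
    induction t with
    | zero =>
      have h1 : D1 0 = fun sa : S × A => (ρ0 sa.1).toReal * ((πs1 0 sa.1) sa.2).toReal := by
        funext sa
        rw [hD1]
        simp only [marginal]
      have h2 : D2 0 = fun sa : S × A => (ρ0 sa.1).toReal * ((πs2 0 sa.1) sa.2).toReal := by
        funext sa
        rw [hD2]
        simp only [marginal]
      rw [h1, h2]
      by_cases hk : 0 < k
      · have e1 : πs1 0 = π1post := by rw [hπs1]; simp [hk]
        have e2 : πs2 0 = π2post := by rw [hπs2]; simp [hk]
        rw [e1, e2]
        refine (tv_base ρ0 π1post π2post επpost hπpost).trans ?_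
        rw [hB]
        simp [Nat.not_le.mpr hk]
      · have hk0 : k = 0 := Nat.eq_zero_of_not_pos hk
        have e1 : πs1 0 = π1pre := by rw [hπs1]; simp [hk0]
        have e2 : πs2 0 = π2pre := by rw [hπs2]; simp [hk0]
        rw [e1, e2]
        refine (tv_base ρ0 π1pre π2pre επpre hπpre).trans ?_
        rw [hB]
        simp [hk0]
        linarith
    | succ t ih =>
      refine (hstep t).trans ?_
      have key : B t + (if t < k then εmpost else εmpre)
          + (if t + 1 < k then επpost else επpre) ≤ B (t + 1) := by
        rcases lt_trichotomy (t + 1) k with h | h | h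
        · -- t + 1 < k
          have ht : t < k := Nat.lt_of_succ_lt h
          rw [hB]
          simp only [if_pos ht, if_pos h, min_eq_left ht.le, min_eq_left h.le,
            Nat.sub_eq_zero_of_le ht.le, Nat.sub_eq_zero_of_le h.le,
            if_neg (Nat.not_le.mpr ht), if_neg (Nat.not_le.mpr h)]
          push_cast
          ring_nf
          linarith
        · -- t + 1 = k
          have ht : t < k := by omega
          have hle : t + 1 ≤ k := h.le
          rw [hB]
          simp only [if_pos ht, if_neg (lt_irrefl k ∘ (h ▸ ·)), min_eq_left ht.le,
            min_eq_left hle, Nat.sub_eq_zero_of_le ht.le, Nat.sub_eq_zero_of_le hle,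
            if_neg (Nat.not_le.mpr ht), if_pos (le_of_eq h.symm), Nat.lt_irrefl]
          have hnl : ¬ (t + 1 < k) := by omega
          rw [if_neg hnl]
          push_cast
          ring_nf
          linarith
        · -- k < t + 1, i.e. k ≤ t
          have ht : k ≤ t := by omega
          have hnt : ¬ t < k := Nat.not_lt.mpr ht
          have hnt1 : ¬ t + 1 < k := by omega
          rw [hB]
          simp only [if_neg hnt, if_neg hnt1, min_eq_right ht, min_eq_right (by omega : k ≤ t + 1),
            if_pos ht, if_pos (by omega : k ≤ t + 1)]
          rw [Nat.succ_sub ht]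
          push_cast
          ring_nf
          exact le_rfl
      exact le_trans (by linarith [ih]) key
  -- bounding the return difference
  have hgeom : Summable (fun t : ℕ => γ ^ t) := summable_geometric_of_lt_one hγ0.le hγ1
  have habsγ : ∀ t : ℕ, |γ ^ t| = γ ^ t := fun t => abs_of_nonneg (pow_nonneg hγ0.le t)
  have hsum1 : Summable (fun t : ℕ => γ ^ t * ∑ sa : S × A, D1 t sa * r sa) := by
    refine Summable.of_norm_bounded (hgeom.mul_left rmax) ?_
    intro t
    rw [Real.norm_eq_abs, abs_mul, habsγ t, mul_comm]
    exact mul_le_mul_of_nonneg_right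
      (sum_reward_abs (D1 t) (marginal_nonneg ρ0 πs1 ps1 t) (marginal_mass ρ0 πs1 ps1 t) r rmax hr)
      (pow_nonneg hγ0.le t)
  have hsum2 : Summable (fun t : ℕ => γ ^ t * ∑ sa : S × A, D2 t sa * r sa) := by
    refine Summable.of_norm_bounded (hgeom.mul_left rmax) ?_
    intro t
    rw [Real.norm_eq_abs, abs_mul, habsγ t, mul_comm]
    exact mul_le_mul_of_nonneg_right
      (sum_reward_abs (D2 t) (marginal_nonneg ρ0 πs2 ps2 t) (marginal_mass ρ0 πs2 ps2 t) r rmax hr)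
      (pow_nonneg hγ0.le t)
  -- majorant
  set g : ℕ → ℝ := fun t => 2 * rmax * ((εmpost + επpost) * (((min t k : ℕ) : ℝ) * γ ^ t)
      + (εmpre + επpre) * (((t - k : ℕ) : ℝ) * γ ^ t)
      + επpost * γ ^ t
      + επpre * ((if k ≤ t then (1:ℝ) else 0) * γ ^ t)) with hg
  have hgB : ∀ t : ℕ, γ ^ t * (2 * rmax * B t) = g t := by
    intro t
    rw [hg, hB]
    by_cases h : k ≤ t <;> simp only [if_pos, if_neg, h, if_true, if_false] <;> ring
  have hptbound : ∀ t : ℕ,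
      |γ ^ t * ∑ sa : S × A, D1 t sa * r sa - γ ^ t * ∑ sa : S × A, D2 t sa * r sa| ≤ g t := by
    intro t
    rw [← hgB t, ← mul_sub, abs_mul, habsγ t]
    refine mul_le_mul_of_nonneg_left ?_ (pow_nonneg hγ0.le t)
    refine (sum_reward_diff (D1 t) (D2 t) r rmax hr).trans ?_
    exact mul_le_mul_of_nonneg_left (hδB t) (by positivity)
  -- summability of the majorant pieces
  have hu1 : Summable (fun t : ℕ => ((min t k : ℕ) : ℝ) * γ ^ t) := by
    refine Summable.of_norm_bounded (hgeom.mul_left (k : ℝ)) ?_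
    intro t
    rw [Real.norm_eq_abs, abs_mul, habsγ t, abs_of_nonneg (Nat.cast_nonneg _)]
    exact mul_le_mul_of_nonneg_right (Nat.cast_le.mpr (min_le_right t k)) (pow_nonneg hγ0.le t)
  obtain ⟨hu2, hu2t⟩ := tsum_shift_linear γ hγ0 hγ1 k
  obtain ⟨hu4, hu4t⟩ := tsum_shift_indicator γ hγ0 hγ1 k
  have hgsummable : Summable g := by
    rw [hg]
    refine Summable.mul_left _ ?_
    exact (((hu1.mul_left _).add (hu2.mul_left _)).add (hgeom.mul_left _)).add (hu4.mul_left _)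
  -- the tsum of the majorant
  have hu1t : ∑' t : ℕ, ((min t k : ℕ) : ℝ) * γ ^ t ≤ (k : ℝ) * (1 - γ)⁻¹ := by
    have := Summable.tsum_le_tsum (f := fun t : ℕ => ((min t k : ℕ) : ℝ) * γ ^ t)
      (g := fun t : ℕ => (k : ℝ) * γ ^ t)
      (fun t => mul_le_mul_of_nonneg_right (Nat.cast_le.mpr (min_le_right t k))
        (pow_nonneg hγ0.le t)) hu1 (hgeom.mul_left _)
    rwa [tsum_mul_left, tsum_geometric_of_lt_one hγ0.le hγ1] at this
  have hgt : ∑' t : ℕ, g t ≤ 2 * rmax * (γ ^ (k + 1) * (εmpre + επpre) / (1 - γ) ^ 2 +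
      (k : ℝ) * (εmpost + επpost) / (1 - γ) + γ ^ k * επpre / (1 - γ) + επpost / (1 - γ)) := by
    rw [hg, tsum_mul_left]
    refine mul_le_mul_of_nonneg_left ?_ (by positivity)
    rw [Summable.tsum_add (((hu1.mul_left _).add (hu2.mul_left _)).add (hgeom.mul_left _))
        (hu4.mul_left _),
      Summable.tsum_add ((hu1.mul_left _).add (hu2.mul_left _)) (hgeom.mul_left _),
      Summable.tsum_add (hu1.mul_left _) (hu2.mul_left _),
      tsum_mul_left, tsum_mul_left, tsum_mul_left, tsum_mul_left,
      hu2t, hu4t, tsum_geometric_of_lt_one hγ0.le hγ1]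
    have hT1 : (εmpost + επpost) * (∑' t : ℕ, ((min t k : ℕ) : ℝ) * γ ^ t)
        ≤ (k : ℝ) * (εmpost + επpost) / (1 - γ) := by
      by_cases hk : 0 < k
      · have hX : 0 ≤ εmpost + επpost := add_nonneg (hεmpost0 hk) hεπpost0
        calc (εmpost + επpost) * (∑' t : ℕ, ((min t k : ℕ) : ℝ) * γ ^ t)
            ≤ (εmpost + επpost) * ((k : ℝ) * (1 - γ)⁻¹) :=
              mul_le_mul_of_nonneg_left hu1t hX
          _ = (k : ℝ) * (εmpost + επpost) / (1 - γ) := by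
              rw [div_eq_mul_inv]; ring
      · have hk0 : k = 0 := Nat.eq_zero_of_not_pos hk
        subst hk0
        simp
    have h1γ : (0:ℝ) < 1 - γ := by linarith
    have heq : (εmpre + επpre) * (γ ^ (k + 1) / (1 - γ) ^ 2) + επpost * (1 - γ)⁻¹
        + επpre * (γ ^ k * (1 - γ)⁻¹)
        = γ ^ (k + 1) * (εmpre + επpre) / (1 - γ) ^ 2 + γ ^ k * επpre / (1 - γ)
          + επpost / (1 - γ) := by
      field_simp
      ring
    linarith [hT1, le_of_eq heq]
  -- putting everything together
  have hdiffsumm : Summable (fun t : ℕ =>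
      |γ ^ t * ∑ sa : S × A, D1 t sa * r sa - γ ^ t * ∑ sa : S × A, D2 t sa * r sa|) := by
    refine Summable.of_norm_bounded hgsummable ?_
    intro t
    rw [Real.norm_eq_abs, abs_abs]
    exact hptbound t
  have hretdiff : ret γ r D1 - ret γ r D2 = ∑' t : ℕ,
      (γ ^ t * ∑ sa : S × A, D1 t sa * r sa - γ ^ t * ∑ sa : S × A, D2 t sa * r sa) := by
    unfold ret
    rw [Summable.tsum_sub hsum1 hsum2]
  rw [hretdiff]
  calc |∑' t : ℕ, (γ ^ t * ∑ sa : S × A, D1 t sa * r sa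
          - γ ^ t * ∑ sa : S × A, D2 t sa * r sa)|
      ≤ ∑' t : ℕ, |γ ^ t * ∑ sa : S × A, D1 t sa * r sa
          - γ ^ t * ∑ sa : S × A, D2 t sa * r sa| := by
        have hs : Summable (fun t : ℕ => ‖γ ^ t * ∑ sa : S × A, D1 t sa * r sa
            - γ ^ t * ∑ sa : S × A, D2 t sa * r sa‖) := by
          simpa only [Real.norm_eq_abs] using hdiffsumm
        simpa only [Real.norm_eq_abs] using norm_tsum_le_tsum_norm hs
    _ ≤ ∑' t : ℕ, g t := Summable.tsum_le_tsum hptbound hdiffsumm hgsummable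
    _ ≤ _ := hgt
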